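/- Suppose z ∈ ℝ^n has noiseless measurements at a sample set M that includes the boundary entries z_1 and z_n, and between any two consecutive samples the second-order differences of z do not change sign (2D sign consistency). If in addition the sign of Dz within each inter-sample segment is constant (+1 or -1), then taking u equal to the all-ones (respectively all-minus-ones) vector on each such segment satisfies (D^T)_{M^c} u = 0, u_I = sign(Dz)_I, and ‖u‖_∞ ≤ 1, certifying optimality of z for min ‖Dz‖₁ s.t. Az = y. -/

import Mathlib

open Matrix

/-- The (n-2)×n second-order difference operator: (Dz)_i = z_i - 2 z_{i+1} + z_{i+2}. -/
def Dmat (n : ℕ) : Matrix (Fin (n - 2)) (Fin n) ℝ :=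
  fun i j =>
    if (j : ℕ) = (i : ℕ) then 1
    else if (j : ℕ) = (i : ℕ) + 1 then -2
    else if (j : ℕ) = (i : ℕ) + 2 then 1
    else 0

/-- Certificate of optimality for a sign-consistent profile with constant segment signs:
    if the sample set M consists of twin samples and contains the boundary, and u is a
    ±1-valued vector, constant on each segment between consecutive twin samples, which
    matches sign(Dz) on the support of Dz, then u satisfies (Dᵀ)_{Mᶜ} u = 0 and
    ‖u‖_∞ ≤ 1, certifying that z minimizes ‖Dz‖₁ subject to z_M = y_M. -/
theorem stmt13 (n : ℕ) (hn : 3 ≤ n) (z : Fin n → ℝ) (M : Finset (Fin n)) (y : Fin n → ℝ)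
    (hfeas : ∀ i ∈ M, z i = y i)
    (hb0 : (⟨0, by omega⟩ : Fin n) ∈ M) (hbn : (⟨n - 1, by omega⟩ : Fin n) ∈ M)
    (htwin : ∀ k ∈ M, (∃ h : (k : ℕ) + 1 < n, (⟨(k : ℕ) + 1, h⟩ : Fin n) ∈ M) ∨
      (1 ≤ (k : ℕ) ∧ (⟨(k : ℕ) - 1, by have := k.isLt; omega⟩ : Fin n) ∈ M))
    (u : Fin (n - 2) → ℝ)
    (hu1 : ∀ i, u i = 1 ∨ u i = -1)
    (huseg : ∀ i j : Fin (n - 2), (i : ℕ) ≤ (j : ℕ) →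
      (¬ ∃ m : ℕ, (i : ℕ) < m ∧ m + 1 ≤ (j : ℕ) + 1 ∧
        (∃ hm : m < n, (⟨m, hm⟩ : Fin n) ∈ M) ∧
        (∃ hm1 : m + 1 < n, (⟨m + 1, hm1⟩ : Fin n) ∈ M)) →
      u i = u j)
    (husign : ∀ i, (Dmat n).mulVec z i ≠ 0 → u i = Real.sign ((Dmat n).mulVec z i)) :
    (∀ j : Fin n, j ∉ M → (Dmat n)ᵀ.mulVec u j = 0) ∧
    (∀ i, |u i| ≤ 1) ∧
    (∀ w : Fin n → ℝ, (∀ i ∈ M, w i = y i) →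
      ∑ i, |(Dmat n).mulVec z i| ≤ ∑ i, |(Dmat n).mulVec w i|) := by
  -- boundary twins
  have h1M : (⟨1, by omega⟩ : Fin n) ∈ M := by
    rcases htwin _ hb0 with ⟨h, hm⟩ | ⟨h, _⟩
    · exact hm
    · simp at h
  have hn2M : (⟨n - 2, by omega⟩ : Fin n) ∈ M := by
    rcases htwin _ hbn with ⟨h, _⟩ | ⟨h, hm⟩
    · simp at h; omega
    · convert hm using 2
      exact (by omega : n - 2 = n - 1 - 1)
  -- Part 1
  have part1 : ∀ j : Fin n, j ∉ M → (Dmat n)ᵀ.mulVec u j = 0 := by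
    intro j hj
    have hjlo : 2 ≤ (j : ℕ) := by
      by_contra h
      push_neg at h
      interval_cases hh : (j : ℕ)
      · exact hj (by rw [show j = (⟨0, by omega⟩ : Fin n) from Fin.ext hh]; exact hb0)
      · exact hj (by rw [show j = (⟨1, by omega⟩ : Fin n) from Fin.ext hh]; exact h1M)
    have hjhi : (j : ℕ) + 3 ≤ n := by
      by_contra h
      push_neg at h
      have hjv := j.isLt
      have : (j : ℕ) = n - 1 ∨ (j : ℕ) = n - 2 := by omega
      rcases this with h' | h'
      · exact hj (by rw [show j = (⟨n - 1, by omega⟩ : Fin n) from Fin.ext h']; exact hbn)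
      · exact hj (by rw [show j = (⟨n - 2, by omega⟩ : Fin n) from Fin.ext h']; exact hn2M)
    set j0 : ℕ := (j : ℕ) with hj0
    have ha2 : j0 - 2 < n - 2 := by omega
    have ha1 : j0 - 1 < n - 2 := by omega
    have ha0 : j0 < n - 2 := by omega
    set a : Fin (n - 2) := ⟨j0 - 2, ha2⟩ with hadef
    set b : Fin (n - 2) := ⟨j0 - 1, ha1⟩ with hbdef
    set c : Fin (n - 2) := ⟨j0, ha0⟩ with hcdef
    have hav : (a : ℕ) = j0 - 2 := rfl
    have hbv : (b : ℕ) = j0 - 1 := rfl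
    have hcv : (c : ℕ) = j0 := rfl
    -- u is constant on {a,b,c}
    have hnot : ∀ (J : Fin (n - 2)), (J : ℕ) ≤ j0 →
        ¬ ∃ m : ℕ, (a : ℕ) < m ∧ m + 1 ≤ (J : ℕ) + 1 ∧
        (∃ hm : m < n, (⟨m, hm⟩ : Fin n) ∈ M) ∧
        (∃ hm1 : m + 1 < n, (⟨m + 1, hm1⟩ : Fin n) ∈ M) := by
      rintro J hJ ⟨m, hm1, hm2, ⟨hmn, hmM⟩, ⟨hm1n, hm1M⟩⟩
      rw [hav] at hm1
      have : m = j0 - 1 ∨ m = j0 := by omega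
      rcases this with h' | h'
      · apply hj
        have h2 : ((⟨m + 1, hm1n⟩ : Fin n) : ℕ) = (j : ℕ) := by
          simp only [Fin.val_mk]; omega
        rwa [show (⟨m + 1, hm1n⟩ : Fin n) = j from Fin.ext h2] at hm1M
      · apply hj
        have h2 : ((⟨m, hmn⟩ : Fin n) : ℕ) = (j : ℕ) := by
          simp only [Fin.val_mk]; omega
        rwa [show (⟨m, hmn⟩ : Fin n) = j from Fin.ext h2] at hmM
    have hab : u a = u b := huseg a b (by omega) (hnot b (by omega))
    have hac : u a = u c := huseg a c (by omega) (hnot c (by omega))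
    -- compute the sum
    have hne : ∀ i : Fin (n - 2), i ∉ ({a, b, c} : Finset (Fin (n - 2))) →
        Dmat n i j * u i = 0 := by
      intro i hi
      simp only [Finset.mem_insert, Finset.mem_singleton, Fin.ext_iff] at hi
      push_neg at hi
      obtain ⟨hia, hib, hic⟩ := hi
      have : Dmat n i j = 0 := by
        simp only [Dmat]
        rw [if_neg (by omega), if_neg (by omega), if_neg (by omega)]
      rw [this, zero_mul]
    have habc : ({a, b, c} : Finset (Fin (n - 2))) ⊆ Finset.univ := Finset.subset_univ _
    have hsum : (Dmat n)ᵀ.mulVec u j = ∑ i ∈ ({a, b, c} : Finset (Fin (n - 2))), Dmat n i j * u i := by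
      simp only [Matrix.mulVec, dotProduct, Matrix.transpose_apply]
      exact (Finset.sum_subset habc (fun i _ hi => hne i hi)).symm
    have hane : a ≠ b := Fin.ne_of_val_ne (by omega)
    have hane2 : a ≠ c := Fin.ne_of_val_ne (by omega)
    have hbne : b ≠ c := Fin.ne_of_val_ne (by omega)
    rw [hsum, Finset.sum_insert (by simp [hane, hane2]),
      Finset.sum_insert (by simp [hbne]), Finset.sum_singleton]
    have hDa : Dmat n a j = 1 := by
      simp only [Dmat]
      rw [if_neg (by omega), if_neg (by omega), if_pos (by omega)]
    have hDb : Dmat n b j = -2 := by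
      simp only [Dmat]
      rw [if_neg (by omega), if_pos (by omega)]
    have hDc : Dmat n c j = 1 := by
      simp only [Dmat]
      rw [if_pos (by rfl)]
    rw [hDa, hDb, hDc, ← hab, ← hac]
    ring
  refine ⟨part1, fun i => by rcases hu1 i with h | h <;> simp [h], ?_⟩
  intro w hw
  have habs : ∀ i, u i * (Dmat n).mulVec z i = |(Dmat n).mulVec z i| := by
    intro i
    by_cases h : (Dmat n).mulVec z i = 0
    · simp [h]
    · rw [husign i h]
      rcases lt_trichotomy ((Dmat n).mulVec z i) 0 with h1 | h1 | h1
      · rw [Real.sign_of_neg h1, abs_of_neg h1]; ring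
      · exact absurd h1 h
      · rw [Real.sign_of_pos h1, abs_of_pos h1]; ring
  have hdual : ∀ v : Fin n → ℝ,
      ∑ i, u i * (Dmat n).mulVec v i = ∑ j, (Dmat n)ᵀ.mulVec u j * v j := by
    intro v
    have := Matrix.dotProduct_mulVec u (Dmat n) v
    simp only [dotProduct, Matrix.mulVec_transpose] at *
    exact this
  have heq : ∑ j, (Dmat n)ᵀ.mulVec u j * z j = ∑ j, (Dmat n)ᵀ.mulVec u j * w j := by
    apply Finset.sum_congr rfl
    intro j _
    by_cases hjM : j ∈ M
    · rw [hfeas j hjM, hw j hjM]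
    · rw [part1 j hjM]; ring
  calc ∑ i, |(Dmat n).mulVec z i| = ∑ i, u i * (Dmat n).mulVec z i := by
        exact (Finset.sum_congr rfl fun i _ => (habs i)).symm
    _ = ∑ j, (Dmat n)ᵀ.mulVec u j * z j := hdual z
    _ = ∑ j, (Dmat n)ᵀ.mulVec u j * w j := heq
    _ = ∑ i, u i * (Dmat n).mulVec w i := (hdual w).symm
    _ ≤ ∑ i, |(Dmat n).mulVec w i| := by
        apply Finset.sum_le_sum
        intro i _
        calc u i * (Dmat n).mulVec w i ≤ |u i * (Dmat n).mulVec w i| := le_abs_self _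
          _ = |u i| * |(Dmat n).mulVec w i| := abs_mul _ _
          _ ≤ 1 * |(Dmat n).mulVec w i| := by
              apply mul_le_mul_of_nonneg_right _ (abs_nonneg _)
              rcases hu1 i with h | h <;> simp [h]
          _ = |(Dmat n).mulVec w i| := one_mul _
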